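/- arXiv:1009.1310 — 3 statements merged into one kernel-verified Lean document; each statement's English description precedes it below -/
import Mathlib

section
/- Let A be a measure space with σ-finite measure μ, let p ≥ 1, and let f ∈ L²(A^p, μ^⊗p) be symmetric. For σ ∈ S_{2p} with #(σ({1,…,p}) ∩ {1,…,p}) = r, the integral ∫_{A^{2p}} f(t_1,…,t_p) f(t_{σ(1)},…,t_{σ(p)}) f(t_{p+1},…,t_{2p}) f(t_{σ(p+1)},…,t_{σ(2p)}) dμ^{⊗2p} equals ‖f ⊗_r f‖²_{L²(A^{2p−2r})}, the squared L² norm of the contraction of order r of f with itself. -/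
open MeasureTheory Finset

def padA {A : Type*} [Inhabited A] {k : ℕ} (x : Fin k → A) (n : ℕ) : A :=
  if h : n < k then x ⟨n, h⟩ else default


set_option linter.unusedSectionVars false

section Aux

variable {A : Type*} [MeasurableSpace A] {μ : Measure A} [SigmaFinite μ] {p N : ℕ}

theorem exists_comp_perm {e e' : Fin p → Fin N} (he : Function.Injective e)
    (he' : Function.Injective e') (him : Set.range e = Set.range e') :
    ∃ ρ : Equiv.Perm (Fin p), e' ∘ ρ = e := by
  have h1 : ∀ i, e i ∈ Set.range e' := fun i => him ▸ Set.mem_range_self i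
  let ρ0 : Fin p → Fin p := fun i => (Equiv.ofInjective e' he').symm ⟨e i, h1 i⟩
  have hcomp : ∀ i, e' (ρ0 i) = e i := by
    intro i
    have := Equiv.apply_ofInjective_symm he' (⟨e i, h1 i⟩ : Set.range e')
    simpa [ρ0] using this
  have hinj : Function.Injective ρ0 := by
    intro i j h
    apply he; rw [← hcomp i, ← hcomp j, h]
  exact ⟨Equiv.ofBijective ρ0 (Finite.injective_iff_bijective.mp hinj), funext fun i => hcomp i⟩

theorem sym_comp_eq {f : (Fin p → A) → ℝ}
    (hsym : ∀ (π : Equiv.Perm (Fin p)) (x : Fin p → A), f (x ∘ π) = f x)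
    {e e' : Fin p → Fin N} (he : Function.Injective e) (he' : Function.Injective e')
    (him : Set.range e = Set.range e') (t : Fin N → A) :
    f (fun i => t (e i)) = f (fun i => t (e' i)) := by
  obtain ⟨ρ, hρ⟩ := exists_comp_perm he he' him
  have h2 : (fun i => t (e i)) = (fun i => t (e' i)) ∘ ρ := by
    funext i
    have : e' (ρ i) = e i := congrFun hρ i
    simp [Function.comp, this]
  rw [h2, hsym]

theorem memL2_pair {f : (Fin p → A) → ℝ}
    (hf : MemLp f 2 (Measure.pi fun _ : Fin p => μ))
    (E : (Fin p ⊕ Fin p) ≃ Fin N) :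
    MemLp (fun t : Fin N → A => f (fun i => t (E (Sum.inl i))) * f (fun i => t (E (Sum.inr i)))) 2
      (Measure.pi fun _ : Fin N => μ) := by
  set P := Measure.pi fun _ : Fin p => μ with hP
  have hF0 : MemLp (fun yz : (Fin p → A) × (Fin p → A) => f yz.1 * f yz.2) 2 (P.prod P) := by
    have hm : AEStronglyMeasurable (fun yz : (Fin p → A) × (Fin p → A) => f yz.1 * f yz.2)
        (P.prod P) := hf.1.comp_fst.mul hf.1.comp_snd
    rw [memLp_two_iff_integrable_sq hm]
    have h2 := (hf.integrable_sq).mul_prod (hf.integrable_sq)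
    exact h2.congr (Filter.Eventually.of_forall fun z => by ring)
  have hmp1 : MeasurePreserving (MeasurableEquiv.piCongrLeft (fun _ : Fin N => A) E).symm
      (Measure.pi fun _ : Fin N => μ) (Measure.pi fun _ : Fin p ⊕ Fin p => μ) :=
    (measurePreserving_piCongrLeft (fun _ : Fin N => μ) E).symm _
  have hmp2 : MeasurePreserving (MeasurableEquiv.sumPiEquivProdPi (fun _ : Fin p ⊕ Fin p => A))
      (Measure.pi fun _ : Fin p ⊕ Fin p => μ) (P.prod P) :=
    measurePreserving_sumPiEquivProdPi (fun _ => μ)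
  have hc := hF0.comp_measurePreserving (hmp2.comp hmp1)
  have heq : ((fun yz : (Fin p → A) × (Fin p → A) => f yz.1 * f yz.2) ∘
      ((MeasurableEquiv.sumPiEquivProdPi (fun _ : Fin p ⊕ Fin p => A)) ∘
        (MeasurableEquiv.piCongrLeft (fun _ : Fin N => A) E).symm))
      = (fun t : Fin N → A => f (fun i => t (E (Sum.inl i))) * f (fun i => t (E (Sum.inr i)))) := by
    rfl
  rwa [← heq]



theorem aux_inj {n a b c : ℕ} (hc : c = a + b) {S T : Finset (Fin n)}
    (hST : ∀ x ∈ S, x ∉ T) (u : Fin a ≃ {x // x ∈ S}) (v : Fin b ≃ {x // x ∈ T}) :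
    Function.Injective (fun i : Fin c => if h : i.val < a then (u ⟨i.val, h⟩ : Fin n)
        else (v ⟨i.val - a, by have := i.isLt; omega⟩ : Fin n)) := by
  intro i j hij
  simp only at hij
  split_ifs at hij with h1 h2 h2
  · have := u.injective (Subtype.coe_injective hij)
    have := congrArg Fin.val this
    simp only at this
    exact Fin.ext this
  · exact absurd (v _).2 (hST _ ((hij ▸ (u _).2)))
  · exact absurd (v _).2 (hST _ ((hij.symm ▸ (u _).2)))
  · have := v.injective (Subtype.coe_injective hij)
    have := congrArg Fin.val this
    simp only at this
    have hi := i.isLt; have hj := j.isLt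
    exact Fin.ext (by omega)

theorem aux_range {n a b c : ℕ} (hc : c = a + b) {S T : Finset (Fin n)}
    (u : Fin a ≃ {x // x ∈ S}) (v : Fin b ≃ {x // x ∈ T}) :
    Set.range (fun i : Fin c => if h : i.val < a then (u ⟨i.val, h⟩ : Fin n)
        else (v ⟨i.val - a, by have := i.isLt; omega⟩ : Fin n)) = ↑S ∪ ↑T := by
  ext x
  constructor
  · rintro ⟨i, rfl⟩
    beta_reduce
    by_cases h : i.val < a
    · rw [dif_pos h]; exact Or.inl (u _).2
    · rw [dif_neg h]; exact Or.inr (v _).2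
  · rintro (hx | hx)
    · refine ⟨⟨(u.symm ⟨x, hx⟩).val, by have := (u.symm ⟨x, hx⟩).isLt; omega⟩, ?_⟩
      beta_reduce
      rw [dif_pos (show ((u.symm ⟨x, hx⟩).val : ℕ) < a from (u.symm ⟨x, hx⟩).isLt)]
      rw [Fin.eta, Equiv.apply_symm_apply]
    · refine ⟨⟨a + (v.symm ⟨x, hx⟩).val, by have := (v.symm ⟨x, hx⟩).isLt; omega⟩, ?_⟩
      beta_reduce
      rw [dif_neg (show ¬(a + (v.symm ⟨x, hx⟩).val < a) by omega)]
      have h2 : (⟨a + (v.symm ⟨x, hx⟩).val - a, by have := (v.symm ⟨x, hx⟩).isLt; omega⟩ : Fin b)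
          = v.symm ⟨x, hx⟩ := Fin.ext (by show a + (v.symm ⟨x, hx⟩).val - a = (v.symm ⟨x, hx⟩).val; omega)
      rw [h2, Equiv.apply_symm_apply]

end Aux

theorem stmt_3 {A : Type*} [MeasurableSpace A] [Inhabited A] (μ : Measure A) [SigmaFinite μ]
    (p r : ℕ) (hp : 1 ≤ p) (hr : r ≤ p)
    (f : (Fin p → A) → ℝ)
    (hsym : ∀ (π : Equiv.Perm (Fin p)) (x : Fin p → A), f (x ∘ π) = f x)
    (hf : MemLp f 2 (Measure.pi fun _ : Fin p => μ))
    (σ : Equiv.Perm (Fin (2*p)))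
    (hcard : ((((Finset.univ.filter (fun i : Fin (2*p) => (i : ℕ) < p)).image σ)
        ∩ (Finset.univ.filter (fun i : Fin (2*p) => (i : ℕ) < p))).card = r)) :
    (∫ t : Fin (2*p) → A,
        f (fun i : Fin p => t ⟨i.val, by have := i.isLt; omega⟩)
        * f (fun i : Fin p => t (σ ⟨i.val, by have := i.isLt; omega⟩))
        * f (fun i : Fin p => t ⟨p + i.val, by have := i.isLt; omega⟩)
        * f (fun i : Fin p => t (σ ⟨p + i.val, by have := i.isLt; omega⟩))
      ∂(Measure.pi fun _ : Fin (2*p) => μ))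
    = ∫ x : Fin (2*p - 2*r) → A,
        (∫ s : Fin r → A,
          f (fun i : Fin p => if i.val < p - r then padA x i.val else padA s (i.val - (p - r)))
          * f (fun i : Fin p =>
              if i.val < p - r then padA x ((p - r) + i.val) else padA s (i.val - (p - r)))
        ∂(Measure.pi fun _ : Fin r => μ)) ^ 2
      ∂(Measure.pi fun _ : Fin (2*p - 2*r) => μ) := by
  classical
  set I : Finset (Fin (2*p)) := univ.filter (fun i => (i : ℕ) < p) with hI_def
  set J : Finset (Fin (2*p)) := I.image σ with hJ_def
  have hIcard : I.card = p := by
    have h : I = Finset.map ⟨fun i : Fin p => (⟨i.val, by have := i.isLt; omega⟩ : Fin (2*p)),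
        fun a b h => by simpa [Fin.ext_iff] using congrArg Fin.val h⟩ univ := by
      ext x
      simp only [hI_def, Finset.mem_filter, Finset.mem_map, Finset.mem_univ, true_and,
        Function.Embedding.coeFn_mk]
      constructor
      · intro hx; exact ⟨⟨x.val, hx⟩, Fin.ext rfl⟩
      · rintro ⟨y, rfl⟩; exact y.isLt
    rw [h, Finset.card_map, Finset.card_univ, Fintype.card_fin]
  have hJcard : J.card = p := by
    rw [hJ_def, Finset.card_image_of_injective _ σ.injective, hIcard]
  set S₁ : Finset (Fin (2*p)) := J ∩ I with hS1_def
  set S₂ : Finset (Fin (2*p)) := I \ J with hS2_def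
  set S₃ : Finset (Fin (2*p)) := J \ I with hS3_def
  set S₄ : Finset (Fin (2*p)) := univ \ (I ∪ J) with hS4_def
  have hc1 : S₁.card = r := hcard
  have hc1' : (J ∩ I).card = r := hS1_def ▸ hc1
  have hc2 : S₂.card = p - r := by
    rw [hS2_def]
    have h := Finset.card_sdiff_add_card_inter I J
    rw [Finset.inter_comm] at h
    omega
  have hc3 : S₃.card = p - r := by
    rw [hS3_def]
    have h := Finset.card_sdiff_add_card_inter J I
    omega
  have huniv : (univ : Finset (Fin (2*p))).card = 2*p := by simp
  have hc4 : S₄.card = r := by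
    rw [hS4_def]
    have h1 := Finset.card_union_add_card_inter I J
    rw [Finset.inter_comm] at h1
    have h2 : (univ \ (I ∪ J)).card = (univ : Finset (Fin (2*p))).card - (I ∪ J).card :=
      Finset.card_sdiff_of_subset (Finset.subset_univ _)
    have h3 := Finset.card_le_univ (I ∪ J)
    omega
  -- enumerations of the blocks
  let al : Fin (p - r) ≃ {x // x ∈ S₂} := (S₂.equivFinOfCardEq hc2).symm
  let be : Fin (p - r) ≃ {x // x ∈ S₃} := (S₃.equivFinOfCardEq hc3).symm
  let ga : Fin r ≃ {x // x ∈ S₁} := (S₁.equivFinOfCardEq hc1).symm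
  let de : Fin r ≃ {x // x ∈ S₄} := (S₄.equivFinOfCardEq hc4).symm
  -- membership classifier
  have hmem : ∀ x : Fin (2*p), (x ∈ S₁ ↔ x ∈ I ∧ x ∈ J) ∧ (x ∈ S₂ ↔ x ∈ I ∧ x ∉ J)
      ∧ (x ∈ S₃ ↔ x ∈ J ∧ x ∉ I) ∧ (x ∈ S₄ ↔ x ∉ I ∧ x ∉ J) := by
    intro x
    simp only [hS1_def, hS2_def, hS3_def, hS4_def, Finset.mem_inter, Finset.mem_sdiff,
      Finset.mem_union, Finset.mem_univ, true_and]
    tauto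
  have hd21 : ∀ x ∈ S₂, x ∉ S₁ := fun x h2 h1 =>
    ((hmem x).2.1.mp h2).2 ((hmem x).1.mp h1).2
  have hd31 : ∀ x ∈ S₃, x ∉ S₁ := fun x h3 h1 =>
    ((hmem x).2.2.1.mp h3).2 ((hmem x).1.mp h1).1
  have hd24 : ∀ x ∈ S₂, x ∉ S₄ := fun x h2 h4 =>
    ((hmem x).2.2.2.mp h4).1 ((hmem x).2.1.mp h2).1
  have hd34 : ∀ x ∈ S₃, x ∉ S₄ := fun x h3 h4 =>
    ((hmem x).2.2.2.mp h4).2 ((hmem x).2.2.1.mp h3).1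
  have hd23 : ∀ x ∈ S₂, x ∉ S₃ := fun x h2 h3 =>
    ((hmem x).2.2.1.mp h3).2 ((hmem x).2.1.mp h2).1
  have hd14 : ∀ x ∈ S₁, x ∉ S₄ := fun x h1 h4 =>
    ((hmem x).2.2.2.mp h4).1 ((hmem x).1.mp h1).1
  -- finset unions
  have hUI : S₂ ∪ S₁ = I := by
    ext x
    rw [Finset.mem_union]
    constructor
    · rintro (h2 | h1)
      · exact ((hmem x).2.1.mp h2).1
      · exact ((hmem x).1.mp h1).1
    · intro hx
      by_cases hxJ : x ∈ J
      · exact Or.inr ((hmem x).1.mpr ⟨hx, hxJ⟩)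
      · exact Or.inl ((hmem x).2.1.mpr ⟨hx, hxJ⟩)
  have hUJ : S₃ ∪ S₁ = J := by
    ext x
    rw [Finset.mem_union]
    constructor
    · rintro (h3 | h1)
      · exact ((hmem x).2.2.1.mp h3).1
      · exact ((hmem x).1.mp h1).2
    · intro hx
      by_cases hxI : x ∈ I
      · exact Or.inr ((hmem x).1.mpr ⟨hxI, hx⟩)
      · exact Or.inl ((hmem x).2.2.1.mpr ⟨hx, hxI⟩)
  have hUIc : S₃ ∪ S₄ = univ \ I := by
    ext x
    constructor
    · intro hx
      rcases Finset.mem_union.mp hx with h3 | h4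
      · exact Finset.mem_sdiff.mpr ⟨Finset.mem_univ x, ((hmem x).2.2.1.mp h3).2⟩
      · exact Finset.mem_sdiff.mpr ⟨Finset.mem_univ x, ((hmem x).2.2.2.mp h4).1⟩
    · intro hx
      have hx' := (Finset.mem_sdiff.mp hx).2
      refine Finset.mem_union.mpr ?_
      by_cases hxJ : x ∈ J
      · exact Or.inl ((hmem x).2.2.1.mpr ⟨hxJ, hx'⟩)
      · exact Or.inr ((hmem x).2.2.2.mpr ⟨hx', hxJ⟩)
  have hUJc : S₂ ∪ S₄ = univ \ J := by
    ext x
    constructor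
    · intro hx
      rcases Finset.mem_union.mp hx with h2 | h4
      · exact Finset.mem_sdiff.mpr ⟨Finset.mem_univ x, ((hmem x).2.1.mp h2).2⟩
      · exact Finset.mem_sdiff.mpr ⟨Finset.mem_univ x, ((hmem x).2.2.2.mp h4).2⟩
    · intro hx
      have hx' := (Finset.mem_sdiff.mp hx).2
      refine Finset.mem_union.mpr ?_
      by_cases hxI : x ∈ I
      · exact Or.inl ((hmem x).2.1.mpr ⟨hxI, hx'⟩)
      · exact Or.inr ((hmem x).2.2.2.mpr ⟨hxI, hx'⟩)
  -- the eight selection maps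
  let ia : Fin p → Fin (2*p) := fun i => ⟨i.val, by have := i.isLt; omega⟩
  let ib : Fin p → Fin (2*p) := fun i => σ (ia i)
  let ic : Fin p → Fin (2*p) := fun i => ⟨p + i.val, by have := i.isLt; omega⟩
  let id' : Fin p → Fin (2*p) := fun i => σ (ic i)
  have hpab : p = (p - r) + r := by omega
  let eI : Fin p → Fin (2*p) := fun i => if h : i.val < p - r then (al ⟨i.val, h⟩ : Fin (2*p))
      else (ga ⟨i.val - (p - r), by have := i.isLt; omega⟩ : Fin (2*p))
  let eJ : Fin p → Fin (2*p) := fun i => if h : i.val < p - r then (be ⟨i.val, h⟩ : Fin (2*p))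
      else (ga ⟨i.val - (p - r), by have := i.isLt; omega⟩ : Fin (2*p))
  let eJc : Fin p → Fin (2*p) := fun i => if h : i.val < p - r then (al ⟨i.val, h⟩ : Fin (2*p))
      else (de ⟨i.val - (p - r), by have := i.isLt; omega⟩ : Fin (2*p))
  let eIc : Fin p → Fin (2*p) := fun i => if h : i.val < p - r then (be ⟨i.val, h⟩ : Fin (2*p))
      else (de ⟨i.val - (p - r), by have := i.isLt; omega⟩ : Fin (2*p))
  -- injectivity and ranges
  have hia_inj : Function.Injective ia := fun i j h => Fin.ext (by
    simpa [ia, Fin.ext_iff] using h)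
  have hic_inj : Function.Injective ic := fun i j h => Fin.ext (by
    have := congrArg Fin.val h
    simp only [ic] at this
    omega)
  have hib_inj : Function.Injective ib := fun i j h => hia_inj (σ.injective h)
  have hid_inj : Function.Injective id' := fun i j h => hic_inj (σ.injective h)
  have hia_range : Set.range ia = ↑I := by
    ext x
    simp only [Set.mem_range, Finset.coe_filter, hI_def, Set.mem_setOf_eq, Finset.mem_univ,
      true_and]
    constructor
    · rintro ⟨i, rfl⟩; exact i.isLt
    · intro hx; exact ⟨⟨x.val, hx⟩, Fin.ext rfl⟩
  have hic_range : Set.range ic = ↑(univ \ I) := by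
    ext x
    simp only [Set.mem_range, Finset.coe_sdiff, Set.mem_diff, Finset.coe_filter, hI_def,
      Set.mem_setOf_eq, Finset.mem_univ, true_and, Finset.coe_univ, Set.mem_univ]
    constructor
    · rintro ⟨i, rfl⟩; simp only [ic]; omega
    · intro hx
      have hx2 := x.isLt
      exact ⟨⟨x.val - p, by omega⟩, Fin.ext (by simp only [ic]; omega)⟩
  have hib_range : Set.range ib = ↑J := by
    have h1 : Set.range ib = σ '' Set.range ia := by
      rw [show (ib : Fin p → Fin (2*p)) = σ ∘ ia from rfl, Set.range_comp]
    rw [h1, hia_range, hJ_def, Finset.coe_image]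
  have himc : (univ \ I).image σ = univ \ J := by
    ext x
    simp only [Finset.mem_image, Finset.mem_sdiff, Finset.mem_univ, true_and, hJ_def]
    constructor
    · rintro ⟨y, hy, rfl⟩ hin
      obtain ⟨z, hz, hzx⟩ := hin
      exact hy (σ.injective hzx ▸ hz)
    · intro hx
      refine ⟨σ.symm x, fun hc => hx ?_, σ.apply_symm_apply x⟩
      exact ⟨σ.symm x, hc, σ.apply_symm_apply x⟩
  have hid_range : Set.range id' = ↑(univ \ J) := by
    have h1 : Set.range id' = σ '' Set.range ic := by
      rw [show (id' : Fin p → Fin (2*p)) = σ ∘ ic from rfl, Set.range_comp]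
    rw [h1, hic_range, ← Finset.coe_image, himc]
  have heI_inj : Function.Injective eI := aux_inj hpab hd21 al ga
  have heJ_inj : Function.Injective eJ := aux_inj hpab hd31 be ga
  have heJc_inj : Function.Injective eJc := aux_inj hpab hd24 al de
  have heIc_inj : Function.Injective eIc := aux_inj hpab hd34 be de
  have heI_range : Set.range eI = ↑I := by
    rw [show Set.range eI = ↑S₂ ∪ ↑S₁ from aux_range hpab al ga, ← Finset.coe_union, hUI]
  have heJ_range : Set.range eJ = ↑J := by
    rw [show Set.range eJ = ↑S₃ ∪ ↑S₁ from aux_range hpab be ga, ← Finset.coe_union, hUJ]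
  have heJc_range : Set.range eJc = ↑(univ \ J) := by
    rw [show Set.range eJc = ↑S₂ ∪ ↑S₄ from aux_range hpab al de, ← Finset.coe_union, hUJc]
  have heIc_range : Set.range eIc = ↑(univ \ I) := by
    rw [show Set.range eIc = ↑S₃ ∪ ↑S₄ from aux_range hpab be de, ← Finset.coe_union, hUIc]
  -- the master reindexing bijection
  have hwab : 2*p - 2*r = (p - r) + (p - r) := by omega
  let k0 : (Fin (2*p - 2*r) ⊕ (Fin r ⊕ Fin r)) → Fin (2*p) := fun z =>
    Sum.elim (fun j : Fin (2*p - 2*r) => if h : j.val < p - r then (al ⟨j.val, h⟩ : Fin (2*p))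
        else (be ⟨j.val - (p - r), by have := j.isLt; omega⟩ : Fin (2*p)))
      (Sum.elim (fun k : Fin r => (ga k : Fin (2*p))) (fun k : Fin r => (de k : Fin (2*p)))) z
  have hxinj := aux_inj hwab hd23 al be
  have hxrange := aux_range hwab al be
  have hk0inj : Function.Injective k0 := by
    have hx23 : ∀ j : Fin (2*p - 2*r),
        k0 (Sum.inl j) ∈ S₂ ∪ S₃ := by
      intro j
      have : k0 (Sum.inl j) ∈ (↑(S₂) : Set (Fin (2*p))) ∪ ↑(S₃) := by
        rw [← hxrange]; exact Set.mem_range_self j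
      rcases this with h | h
      · exact Finset.mem_union.mpr (Or.inl h)
      · exact Finset.mem_union.mpr (Or.inr h)
    have hval_g : ∀ k, k0 (Sum.inr (Sum.inl k)) = ((ga k : Fin (2*p))) := fun _ => rfl
    have hval_d : ∀ k, k0 (Sum.inr (Sum.inr k)) = ((de k : Fin (2*p))) := fun _ => rfl
    rintro (j | k | k) (j' | k' | k') h
    · exact congrArg Sum.inl (hxinj h)
    · exfalso
      rw [hval_g] at h
      have h1 : k0 (Sum.inl j) ∈ S₁ := by rw [h]; exact (ga k').2
      rcases Finset.mem_union.mp (hx23 j) with h2 | h3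
      · exact hd21 _ h2 h1
      · exact hd31 _ h3 h1
    · exfalso
      rw [hval_d] at h
      have h1 : k0 (Sum.inl j) ∈ S₄ := by rw [h]; exact (de k').2
      rcases Finset.mem_union.mp (hx23 j) with h2 | h3
      · exact hd24 _ h2 h1
      · exact hd34 _ h3 h1
    · exfalso
      rw [hval_g] at h
      have h1 : k0 (Sum.inl j') ∈ S₁ := by rw [← h]; exact (ga k).2
      rcases Finset.mem_union.mp (hx23 j') with h2 | h3
      · exact hd21 _ h2 h1
      · exact hd31 _ h3 h1
    · rw [hval_g, hval_g] at h
      rw [ga.injective (Subtype.coe_injective h)]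
    · exfalso
      rw [hval_g, hval_d] at h
      have h1 : ((ga k : Fin (2*p))) ∈ S₄ := by rw [h]; exact (de k').2
      exact hd14 _ (ga k).2 h1
    · exfalso
      rw [hval_d] at h
      have h1 : k0 (Sum.inl j') ∈ S₄ := by rw [← h]; exact (de k).2
      rcases Finset.mem_union.mp (hx23 j') with h2 | h3
      · exact hd24 _ h2 h1
      · exact hd34 _ h3 h1
    · exfalso
      rw [hval_d, hval_g] at h
      have h1 : ((ga k' : Fin (2*p))) ∈ S₄ := by rw [← h]; exact (de k).2
      exact hd14 _ (ga k').2 h1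
    · rw [hval_d, hval_d] at h
      rw [de.injective (Subtype.coe_injective h)]
  have hk0card : Fintype.card (Fin (2*p - 2*r) ⊕ (Fin r ⊕ Fin r)) = Fintype.card (Fin (2*p)) := by
    simp only [Fintype.card_sum, Fintype.card_fin]
    omega
  have hk0bij : Function.Bijective k0 :=
    (Fintype.bijective_iff_injective_and_card k0).mpr ⟨hk0inj, hk0card⟩
  let ke : (Fin (2*p - 2*r) ⊕ (Fin r ⊕ Fin r)) ≃ Fin (2*p) := Equiv.ofBijective k0 hk0bij
  -- the measurable equivalence and the plain map
  let T : (Fin (2*p) → A) → (Fin (2*p - 2*r) → A) × ((Fin r → A) × (Fin r → A)) := fun t =>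
    (fun j => t (k0 (Sum.inl j)), fun k => t (k0 (Sum.inr (Sum.inl k))),
      fun k => t (k0 (Sum.inr (Sum.inr k))))
  let Tm : (Fin (2*p) → A) ≃ᵐ (Fin (2*p - 2*r) → A) × ((Fin r → A) × (Fin r → A)) :=
    (MeasurableEquiv.piCongrLeft (fun _ : Fin (2*p) => A) ke).symm.trans
      ((MeasurableEquiv.sumPiEquivProdPi (fun _ => A)).trans
        ((MeasurableEquiv.refl (Fin (2*p - 2*r) → A)).prodCongr
          (MeasurableEquiv.sumPiEquivProdPi (fun _ => A))))
  have hTm_coe : ⇑Tm = T := by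
    rfl
  have hTmp : MeasurePreserving Tm (Measure.pi fun _ : Fin (2*p) => μ)
      ((Measure.pi fun _ : Fin (2*p - 2*r) => μ).prod
        ((Measure.pi fun _ : Fin r => μ).prod (Measure.pi fun _ : Fin r => μ))) := by
    have h1 := (measurePreserving_piCongrLeft (fun _ : Fin (2*p) => μ) ke).symm
    have h2 := measurePreserving_sumPiEquivProdPi
      (X := fun _ : Fin (2*p - 2*r) ⊕ (Fin r ⊕ Fin r) => A) (fun _ => μ)
    have h3 := measurePreserving_sumPiEquivProdPi (X := fun _ : Fin r ⊕ Fin r => A) (fun _ => μ)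
    have h4 := (MeasurePreserving.id (Measure.pi fun _ : Fin (2*p - 2*r) => μ)).prod h3
    exact (h4.comp (h2.comp h1) : _)
  -- the component functions on the product side
  let g1 : (Fin (2*p - 2*r) → A) → (Fin r → A) → ℝ := fun x s =>
    f (fun i : Fin p => if i.val < p - r then padA x i.val else padA s (i.val - (p - r)))
  let g2 : (Fin (2*p - 2*r) → A) → (Fin r → A) → ℝ := fun x s =>
    f (fun i : Fin p => if i.val < p - r then padA x ((p - r) + i.val)
      else padA s (i.val - (p - r)))
  -- pointwise identification with the big-space picture
  have hpadA1 : ∀ t : Fin (2*p) → A, g1 (T t).1 (T t).2.1 = f (fun i => t (eI i)) := by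
    intro t
    apply congrArg f
    funext i
    by_cases h : (i : ℕ) < p - r
    · have h1 : (i : ℕ) < 2*p - 2*r := by omega
      rw [if_pos h]
      simp only [padA]
      rw [dif_pos h1]
      show t (k0 (Sum.inl ⟨(i : ℕ), h1⟩)) = t (eI i)
      simp only [k0, Sum.elim_inl, eI]
      rw [dif_pos (show ((⟨(i : ℕ), h1⟩ : Fin (2*p - 2*r)) : ℕ) < p - r from h), dif_pos h]
    · have h2 : (i : ℕ) - (p - r) < r := by have := i.isLt; omega
      rw [if_neg h]
      simp only [padA]
      rw [dif_pos h2]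
      show t (k0 (Sum.inr (Sum.inl ⟨(i : ℕ) - (p - r), h2⟩))) = t (eI i)
      simp only [k0, Sum.elim_inr, Sum.elim_inl, eI]
      rw [dif_neg h]
  have hpadB1 : ∀ t : Fin (2*p) → A, g1 (T t).1 (T t).2.2 = f (fun i => t (eJc i)) := by
    intro t
    apply congrArg f
    funext i
    by_cases h : (i : ℕ) < p - r
    · have h1 : (i : ℕ) < 2*p - 2*r := by omega
      rw [if_pos h]
      simp only [padA]
      rw [dif_pos h1]
      show t (k0 (Sum.inl ⟨(i : ℕ), h1⟩)) = t (eJc i)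
      simp only [k0, Sum.elim_inl, eJc]
      rw [dif_pos (show ((⟨(i : ℕ), h1⟩ : Fin (2*p - 2*r)) : ℕ) < p - r from h), dif_pos h]
    · have h2 : (i : ℕ) - (p - r) < r := by have := i.isLt; omega
      rw [if_neg h]
      simp only [padA]
      rw [dif_pos h2]
      show t (k0 (Sum.inr (Sum.inr ⟨(i : ℕ) - (p - r), h2⟩))) = t (eJc i)
      simp only [k0, Sum.elim_inr, eJc]
      rw [dif_neg h]
  have hpadA2 : ∀ t : Fin (2*p) → A, g2 (T t).1 (T t).2.1 = f (fun i => t (eJ i)) := by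
    intro t
    apply congrArg f
    funext i
    by_cases h : (i : ℕ) < p - r
    · have h1 : (p - r) + (i : ℕ) < 2*p - 2*r := by omega
      rw [if_pos h]
      simp only [padA]
      rw [dif_pos h1]
      show t (k0 (Sum.inl ⟨(p - r) + (i : ℕ), h1⟩)) = t (eJ i)
      simp only [k0, Sum.elim_inl, eJ]
      rw [dif_neg (show ¬(((⟨(p - r) + (i : ℕ), h1⟩ : Fin (2*p - 2*r)) : ℕ) < p - r) by
        show ¬((p - r) + (i : ℕ) < p - r); omega), dif_pos h]
      exact congrArg (fun z : Fin (p - r) => t ((be z : Fin (2*p))))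
        (Fin.ext (show (p - r) + (i : ℕ) - (p - r) = (i : ℕ) by omega))
    · have h2 : (i : ℕ) - (p - r) < r := by have := i.isLt; omega
      rw [if_neg h]
      simp only [padA]
      rw [dif_pos h2]
      show t (k0 (Sum.inr (Sum.inl ⟨(i : ℕ) - (p - r), h2⟩))) = t (eJ i)
      simp only [k0, Sum.elim_inr, Sum.elim_inl, eJ]
      rw [dif_neg h]
  have hpadB2 : ∀ t : Fin (2*p) → A, g2 (T t).1 (T t).2.2 = f (fun i => t (eIc i)) := by
    intro t
    apply congrArg f
    funext i
    by_cases h : (i : ℕ) < p - r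
    · have h1 : (p - r) + (i : ℕ) < 2*p - 2*r := by omega
      rw [if_pos h]
      simp only [padA]
      rw [dif_pos h1]
      show t (k0 (Sum.inl ⟨(p - r) + (i : ℕ), h1⟩)) = t (eIc i)
      simp only [k0, Sum.elim_inl, eIc]
      rw [dif_neg (show ¬(((⟨(p - r) + (i : ℕ), h1⟩ : Fin (2*p - 2*r)) : ℕ) < p - r) by
        show ¬((p - r) + (i : ℕ) < p - r); omega), dif_pos h]
      exact congrArg (fun z : Fin (p - r) => t ((be z : Fin (2*p))))
        (Fin.ext (show (p - r) + (i : ℕ) - (p - r) = (i : ℕ) by omega))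
    · have h2 : (i : ℕ) - (p - r) < r := by have := i.isLt; omega
      rw [if_neg h]
      simp only [padA]
      rw [dif_pos h2]
      show t (k0 (Sum.inr (Sum.inr ⟨(i : ℕ) - (p - r), h2⟩))) = t (eIc i)
      simp only [k0, Sum.elim_inr, eIc]
      rw [dif_neg h]
  -- use symmetry to identify with the canonical selections
  have he1 : ∀ t : Fin (2*p) → A, g1 (T t).1 (T t).2.1 = f (fun i => t (ia i)) := fun t =>
    (hpadA1 t).trans (sym_comp_eq hsym heI_inj hia_inj (heI_range.trans hia_range.symm) t)
  have he2 : ∀ t : Fin (2*p) → A, g2 (T t).1 (T t).2.1 = f (fun i => t (ib i)) := fun t =>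
    (hpadA2 t).trans (sym_comp_eq hsym heJ_inj hib_inj (heJ_range.trans hib_range.symm) t)
  have he3 : ∀ t : Fin (2*p) → A, g2 (T t).1 (T t).2.2 = f (fun i => t (ic i)) := fun t =>
    (hpadB2 t).trans (sym_comp_eq hsym heIc_inj hic_inj (heIc_range.trans hic_range.symm) t)
  have he4 : ∀ t : Fin (2*p) → A, g1 (T t).1 (T t).2.2 = f (fun i => t (id' i)) := fun t =>
    (hpadB1 t).trans (sym_comp_eq hsym heJc_inj hid_inj (heJc_range.trans hid_range.symm) t)
  -- the integrand on the product side
  let G : (Fin (2*p - 2*r) → A) × ((Fin r → A) × (Fin r → A)) → ℝ := fun z =>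
    g1 z.1 z.2.1 * g2 z.1 z.2.1 * g2 z.1 z.2.2 * g1 z.1 z.2.2
  have key : ∀ t : Fin (2*p) → A,
      f (fun i => t (ia i)) * f (fun i => t (ib i)) * f (fun i => t (ic i))
        * f (fun i => t (id' i)) = G (T t) := by
    intro t
    show _ = g1 (T t).1 (T t).2.1 * g2 (T t).1 (T t).2.1 * g2 (T t).1 (T t).2.2
      * g1 (T t).1 (T t).2.2
    rw [he1 t, he2 t, he3 t, he4 t]
  -- square integrability of the two separated products
  have hEa_bij : Function.Bijective (Sum.elim ia ic) := by
    refine (Fintype.bijective_iff_injective_and_card _).mpr ⟨?_, by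
      simp only [Fintype.card_sum, Fintype.card_fin]; omega⟩
    rintro (i | i) (j | j) h
    · exact congrArg Sum.inl (hia_inj h)
    · exfalso
      have := congrArg Fin.val h
      simp only [Sum.elim_inl, Sum.elim_inr, ia, ic] at this
      have hi := i.isLt
      omega
    · exfalso
      have := congrArg Fin.val h
      simp only [Sum.elim_inl, Sum.elim_inr, ia, ic] at this
      have hj := j.isLt
      omega
    · exact congrArg Sum.inr (hic_inj h)
  have hM1 : MemLp (fun t : Fin (2*p) → A => f (fun i => t (ia i)) * f (fun i => t (ic i))) 2
      (Measure.pi fun _ : Fin (2*p) => μ) :=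
    memL2_pair hf (Equiv.ofBijective (Sum.elim ia ic) hEa_bij)
  have hM2 : MemLp (fun t : Fin (2*p) → A => f (fun i => t (ib i)) * f (fun i => t (id' i))) 2
      (Measure.pi fun _ : Fin (2*p) => μ) :=
    memL2_pair hf ((Equiv.ofBijective (Sum.elim ia ic) hEa_bij).trans σ)
  -- transfer to the product space
  let F1 : (Fin (2*p - 2*r) → A) × ((Fin r → A) × (Fin r → A)) → ℝ := fun z =>
    g1 z.1 z.2.1 * g2 z.1 z.2.2
  let F2 : (Fin (2*p - 2*r) → A) × ((Fin r → A) × (Fin r → A)) → ℝ := fun z =>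
    g2 z.1 z.2.1 * g1 z.1 z.2.2
  have hMF1 : MemLp F1 2 ((Measure.pi fun _ : Fin (2*p - 2*r) => μ).prod
      ((Measure.pi fun _ : Fin r => μ).prod (Measure.pi fun _ : Fin r => μ))) := by
    have h0 : MemLp (F1 ∘ ⇑Tm) 2 (Measure.pi fun _ : Fin (2*p) => μ) := by
      have hcomp : F1 ∘ ⇑Tm = fun t : Fin (2*p) → A =>
          f (fun i => t (ia i)) * f (fun i => t (ic i)) := by
        funext t
        show F1 (Tm t) = _
        rw [hTm_coe]
        show g1 (T t).1 (T t).2.1 * g2 (T t).1 (T t).2.2 = _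
        rw [he1 t, he3 t]
      rw [hcomp]
      exact hM1
    have h1 := h0.comp_measurePreserving (hTmp.symm Tm)
    have h2 : (F1 ∘ ⇑Tm) ∘ ⇑Tm.symm = F1 := by
      funext z
      simp [Function.comp, MeasurableEquiv.apply_symm_apply]
    rwa [h2] at h1
  have hMF2 : MemLp F2 2 ((Measure.pi fun _ : Fin (2*p - 2*r) => μ).prod
      ((Measure.pi fun _ : Fin r => μ).prod (Measure.pi fun _ : Fin r => μ))) := by
    have h0 : MemLp (F2 ∘ ⇑Tm) 2 (Measure.pi fun _ : Fin (2*p) => μ) := by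
      have hcomp : F2 ∘ ⇑Tm = fun t : Fin (2*p) → A =>
          f (fun i => t (ib i)) * f (fun i => t (id' i)) := by
        funext t
        show F2 (Tm t) = _
        rw [hTm_coe]
        show g2 (T t).1 (T t).2.1 * g1 (T t).1 (T t).2.2 = _
        rw [he2 t, he4 t]
      rw [hcomp]
      exact hM2
    have h1 := h0.comp_measurePreserving (hTmp.symm Tm)
    have h2 : (F2 ∘ ⇑Tm) ∘ ⇑Tm.symm = F2 := by
      funext z
      simp [Function.comp, MeasurableEquiv.apply_symm_apply]
    rwa [h2] at h1
  have hGint : Integrable G ((Measure.pi fun _ : Fin (2*p - 2*r) => μ).prod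
      ((Measure.pi fun _ : Fin r => μ).prod (Measure.pi fun _ : Fin r => μ))) := by
    have hone : (1 : ENNReal)/1 = 1/2 + 1/2 := by
      rw [ENNReal.div_add_div_same, div_one, one_add_one_eq_two,
        ENNReal.div_self two_ne_zero ENNReal.ofNat_ne_top]
    have h := hMF1.smul (φ := F2) (r := 1) hMF2
    have h' := memLp_one_iff_integrable.mp h
    refine h'.congr (Filter.Eventually.of_forall fun z => ?_)
    show F2 z * F1 z = G z
    show g2 z.1 z.2.1 * g1 z.1 z.2.2 * (g1 z.1 z.2.1 * g2 z.1 z.2.2) = _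
    show _ = g1 z.1 z.2.1 * g2 z.1 z.2.1 * g2 z.1 z.2.2 * g1 z.1 z.2.2
    ring
  -- final computation
  calc
    (∫ t : Fin (2*p) → A,
        f (fun i : Fin p => t ⟨i.val, by have := i.isLt; omega⟩)
        * f (fun i : Fin p => t (σ ⟨i.val, by have := i.isLt; omega⟩))
        * f (fun i : Fin p => t ⟨p + i.val, by have := i.isLt; omega⟩)
        * f (fun i : Fin p => t (σ ⟨p + i.val, by have := i.isLt; omega⟩))
      ∂(Measure.pi fun _ : Fin (2*p) => μ))
      = ∫ t : Fin (2*p) → A, G (Tm t) ∂(Measure.pi fun _ : Fin (2*p) => μ) := by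
        refine integral_congr_ae (Filter.Eventually.of_forall fun t => ?_)
        rw [hTm_coe]
        exact key t
    _ = ∫ z, G z ∂((Measure.pi fun _ : Fin (2*p - 2*r) => μ).prod
        ((Measure.pi fun _ : Fin r => μ).prod (Measure.pi fun _ : Fin r => μ))) :=
      hTmp.integral_comp' G
    _ = ∫ x : Fin (2*p - 2*r) → A, ∫ q : (Fin r → A) × (Fin r → A), G (x, q)
        ∂((Measure.pi fun _ : Fin r => μ).prod (Measure.pi fun _ : Fin r => μ))
        ∂(Measure.pi fun _ : Fin (2*p - 2*r) => μ) := integral_prod G hGint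
    _ = ∫ x : Fin (2*p - 2*r) → A,
        (∫ s : Fin r → A, g1 x s * g2 x s ∂(Measure.pi fun _ : Fin r => μ)) ^ 2
        ∂(Measure.pi fun _ : Fin (2*p - 2*r) => μ) := by
        refine integral_congr_ae (Filter.Eventually.of_forall fun x => ?_)
        beta_reduce
        have h1 : (fun q : (Fin r → A) × (Fin r → A) => G (x, q))
            = fun q : (Fin r → A) × (Fin r → A) =>
              (g1 x q.1 * g2 x q.1) * (g2 x q.2 * g1 x q.2) := by
          funext q
          show g1 x q.1 * g2 x q.1 * g2 x q.2 * g1 x q.2 = _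
          ring
        rw [h1, integral_prod_mul (μ := Measure.pi fun _ : Fin r => μ)
          (ν := Measure.pi fun _ : Fin r => μ)
          (fun s => g1 x s * g2 x s) (fun s' => g2 x s' * g1 x s'), sq]
        congr 1
        refine integral_congr_ae (Filter.Eventually.of_forall fun s => ?_)
        exact mul_comm _ _
    _ = _ := rfl
end

section
/- Let H be a real separable Hilbert space, f ∈ H^⊙p, g ∈ H^⊙q symmetric tensors with 1 ≤ r < min(p, q). Then ‖f ⊗_r g‖²_{H^⊗(p+q−2r)} = ⟨f ⊗_{p−r} f, g ⊗_{q−r} g⟩_{H^⊗2r}, and consequently ‖f ⊗_r g‖² ≤ (1/2)(‖f ⊗_{p−r} f‖²_{H^⊗2r} + ‖g ⊗_{q−r} g‖²_{H^⊗2r}). -/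
open Finset

/-- Padding: view a finite tuple of basis indices as defined on all of `ℕ`. -/
def pad {k : ℕ} (x : Fin k → ℕ) (n : ℕ) : ℕ := if h : n < k then x ⟨n, h⟩ else 0

/-- The contraction of order `r` of `f ∈ H^{⊗p}` and `g ∈ H^{⊗q}`, where tensors over the
real separable Hilbert space `H` are represented by their (square-summable) coefficients
with respect to a complete orthonormal system indexed by `ℕ`. -/
noncomputable def contr (p q r : ℕ) (f : (Fin p → ℕ) → ℝ) (g : (Fin q → ℕ) → ℝ) :
    (Fin (p + q - 2*r) → ℕ) → ℝ :=
  fun x => ∑' s : Fin r → ℕ,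
    f (fun i => if i.val < p - r then pad x i.val else pad s (i.val - (p - r))) *
    g (fun i => if i.val < q - r then pad x ((p - r) + i.val) else pad s (i.val - (q - r)))

/-- Squared norm `‖f‖²` of a tensor given by its coefficients. -/
noncomputable def nsq {k : ℕ} (f : (Fin k → ℕ) → ℝ) : ℝ := ∑' x : Fin k → ℕ, f x ^ 2

/-- Inner product `⟨f, g⟩` of tensors given by their coefficients. -/
noncomputable def hinner {k : ℕ} (f g : (Fin k → ℕ) → ℝ) : ℝ := ∑' x : Fin k → ℕ, f x * g x

/-- Symmetrization of a tensor. -/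
noncomputable def symz {k : ℕ} (f : (Fin k → ℕ) → ℝ) : (Fin k → ℕ) → ℝ :=
  fun x => (1 / (k.factorial : ℝ)) * ∑ σ : Equiv.Perm (Fin k), f (x ∘ σ)

/-- A tensor is symmetric if it is invariant under permutation of its arguments. -/
def IsSym {k : ℕ} (f : (Fin k → ℕ) → ℝ) : Prop :=
  ∀ (σ : Equiv.Perm (Fin k)) (x : Fin k → ℕ), f (x ∘ σ) = f x

/-- Recasting a tensor along the canonical identification `Fin k ≃ Fin k'` when `k = k'`. -/
def recast {k : ℕ} (k' : ℕ) (f : (Fin k → ℕ) → ℝ) : (Fin k' → ℕ) → ℝ :=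
  fun x => f (fun i => pad x i.val)

-- splice equivalence
def fe (m n k : ℕ) (h : m + n = k) : ((Fin m → ℕ) × (Fin n → ℕ)) ≃ (Fin k → ℕ) where
  toFun z := fun i => if h' : i.val < m then z.1 ⟨i, h'⟩ else pad z.2 (i.val - m)
  invFun x := (fun i => x ⟨i.val, by omega⟩, fun j => x ⟨m + j.val, by omega⟩)
  left_inv z := by
    ext i
    · simp
    · have h1 : ¬ (m + i.val < m) := by omega
      have h2 : m + i.val - m = i.val := by omega
      simp [h1, h2, pad, i.isLt]
  right_inv x := by
    funext i
    by_cases h' : i.val < m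
    · simp [h']
    · have h2 : i.val - m < n := by omega
      have h3 : m + (i.val - m) = i.val := by omega
      simp only [h', dif_neg, not_false_iff, pad, h2, dif_pos]
      congr 1
      exact Fin.ext h3

lemma summable_mul_of_sq {S : Type*} {u v : S → ℝ} (hu : Summable fun s => u s ^ 2)
    (hv : Summable fun s => v s ^ 2) : Summable fun s => u s * v s := by
  rw [← summable_abs_iff]
  refine Summable.of_nonneg_of_le (fun s => abs_nonneg _) (fun s => ?_)
    (((hu.add hv).mul_left (1/2)))
  rw [abs_mul]
  nlinarith [sq_nonneg (|u s| - |v s|), sq_abs (u s), sq_abs (v s), abs_nonneg (u s), abs_nonneg (v s)]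

lemma tsum_mul_le_sqrt {S : Type*} {u v : S → ℝ} (hu0 : ∀ s, 0 ≤ u s) (hv0 : ∀ s, 0 ≤ v s)
    (hu : Summable fun s => u s ^ 2) (hv : Summable fun s => v s ^ 2) :
    ∑' s, u s * v s ≤ Real.sqrt (∑' s, u s ^ 2) * Real.sqrt (∑' s, v s ^ 2) := by
  refine Summable.tsum_le_of_sum_le (summable_mul_of_sq hu hv) fun F => ?_
  calc ∑ i ∈ F, u i * v i ≤ Real.sqrt (∑ i ∈ F, u i ^ 2) * Real.sqrt (∑ i ∈ F, v i ^ 2) :=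
        Real.sum_mul_le_sqrt_mul_sqrt F u v
    _ ≤ Real.sqrt (∑' s, u s ^ 2) * Real.sqrt (∑' s, v s ^ 2) := by
        gcongr
        · exact Summable.sum_le_tsum F (fun i _ => sq_nonneg _) hu
        · exact Summable.sum_le_tsum F (fun i _ => sq_nonneg _) hv

section core
variable {A B S : Type*} {F : A × S → ℝ} {G : B × S → ℝ}

lemma sliceS (hF : Summable fun z => F z ^ 2) (s : S) : Summable fun a => F (a, s) ^ 2 :=
  hF.comp_injective (i := fun a => (a, s)) fun a b h => (Prod.ext_iff.mp h).1

lemma sliceS_abs (hF : Summable fun z => F z ^ 2) (s : S) :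
    Summable fun a => |F (a, s)| ^ 2 := by
  simpa [sq_abs] using sliceS hF s

lemma marg (hF : Summable fun z => F z ^ 2) : Summable fun s => ∑' a, F (a, s) ^ 2 := by
  have h := (Equiv.prodComm S A).summable_iff.mpr hF
  exact ((summable_prod_of_nonneg (fun z => sq_nonneg _)).mp h).2

/-- `α` is the slice-norm function. -/
noncomputable def alf (F : A × S → ℝ) (s : S) : ℝ := Real.sqrt (∑' a, F (a, s) ^ 2)

lemma alf_nonneg (s : S) : 0 ≤ alf F s := Real.sqrt_nonneg _

lemma alf_sq (s : S) : alf F s ^ 2 = ∑' a, F (a, s) ^ 2 :=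
  Real.sq_sqrt (tsum_nonneg fun a => sq_nonneg _)

lemma alf_sq_summable (hF : Summable fun z => F z ^ 2) :
    Summable fun s => alf F s ^ 2 := by
  simpa only [alf_sq] using marg hF

lemma abs_tsum_mul_le (hF : Summable fun z => F z ^ 2) (s t : S) :
    |∑' a, F (a, s) * F (a, t)| ≤ alf F s * alf F t := by
  have hs : Summable fun a => F (a, s) * F (a, t) :=
    summable_mul_of_sq (sliceS hF s) (sliceS hF t)
  have hsabs : Summable fun a => |F (a, s) * F (a, t)| := summable_abs_iff.mpr hs
  calc |∑' a, F (a, s) * F (a, t)| ≤ ∑' a, |F (a, s)| * |F (a, t)| := by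
        simpa [Real.norm_eq_abs, abs_mul] using norm_tsum_le_tsum_norm
          (f := fun a => F (a, s) * F (a, t)) (by simpa [Real.norm_eq_abs, abs_mul] using hsabs)
    _ ≤ Real.sqrt (∑' a, |F (a, s)| ^ 2) * Real.sqrt (∑' a, |F (a, t)| ^ 2) :=
        tsum_mul_le_sqrt (fun _ => abs_nonneg _) (fun _ => abs_nonneg _)
          (sliceS_abs hF s) (sliceS_abs hF t)
    _ = alf F s * alf F t := by simp [alf, sq_abs]

lemma coreK (hF : Summable fun z => F z ^ 2) :
    Summable fun w : S × S => (∑' a, F (a, w.1) * F (a, w.2)) ^ 2 := by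
  refine Summable.of_nonneg_of_le (fun w => sq_nonneg _) (fun w => ?_)
    ((alf_sq_summable hF).mul_of_nonneg (alf_sq_summable hF)
      (fun s => sq_nonneg _) (fun s => sq_nonneg _))
  calc (∑' a, F (a, w.1) * F (a, w.2)) ^ 2 = |∑' a, F (a, w.1) * F (a, w.2)| ^ 2 := by
        rw [sq_abs]
    _ ≤ (alf F w.1 * alf F w.2) ^ 2 := by
        have := abs_tsum_mul_le hF w.1 w.2
        nlinarith [abs_nonneg (∑' a, F (a, w.1) * F (a, w.2))]
    _ = alf F w.1 ^ 2 * alf F w.2 ^ 2 := mul_pow _ _ _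

lemma sliceA (hF : Summable fun z => F z ^ 2) (a : A) : Summable fun s => F (a, s) ^ 2 :=
  hF.comp_injective (i := fun s => (a, s)) fun s t h => (Prod.ext_iff.mp h).2

lemma sliceA_abs (hF : Summable fun z => F z ^ 2) (a : A) :
    Summable fun s => |F (a, s)| ^ 2 := by
  simpa [sq_abs] using sliceA hF a

/-- `rho` is the row-norm function. -/
noncomputable def rho (F : A × S → ℝ) (a : A) : ℝ := Real.sqrt (∑' s, F (a, s) ^ 2)

lemma rho_sq_summable (hF : Summable fun z => F z ^ 2) :
    Summable fun a => rho F a ^ 2 := by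
  have h := ((summable_prod_of_nonneg (f := fun z => F z ^ 2) (fun z => sq_nonneg _)).mp hF).2
  refine h.congr fun a => ?_
  exact (Real.sq_sqrt (tsum_nonneg fun s => sq_nonneg _)).symm

lemma row_abs_le (hF : Summable fun z => F z ^ 2) (hG : Summable fun z => G z ^ 2)
    (a : A) (b : B) :
    ∑' s, |F (a, s)| * |G (b, s)| ≤ rho F a * rho G b := by
  calc ∑' s, |F (a, s)| * |G (b, s)|
      ≤ Real.sqrt (∑' s, |F (a, s)| ^ 2) * Real.sqrt (∑' s, |G (b, s)| ^ 2) :=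
        tsum_mul_le_sqrt (fun _ => abs_nonneg _) (fun _ => abs_nonneg _)
          (sliceA_abs hF a) (sliceA_abs hG b)
    _ = rho F a * rho G b := by simp [rho, sq_abs]

lemma M_abs_summable (hF : Summable fun z => F z ^ 2) (hG : Summable fun z => G z ^ 2)
    (a : A) (b : B) : Summable fun s => |F (a, s)| * |G (b, s)| :=
  summable_mul_of_sq (sliceA_abs hF a) (sliceA_abs hG b)

set_option maxHeartbeats 1000000 in
lemma core1 (hF : Summable fun z => F z ^ 2) (hG : Summable fun z => G z ^ 2) :
    ∑' z : A × B, (∑' s : S, F (z.1, s) * G (z.2, s)) ^ 2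
      = ∑' w : S × S, (∑' a, F (a, w.1) * F (a, w.2)) * (∑' b, G (b, w.1) * G (b, w.2)) := by
  set H : (A × B) × (S × S) → ℝ := fun z =>
    (F (z.1.1, z.2.1) * G (z.1.2, z.2.1)) * (F (z.1.1, z.2.2) * G (z.1.2, z.2.2)) with hHdef
  -- summability of |H|
  have hMn : ∀ (a : A) (b : B), Summable fun s => ‖F (a, s) * G (b, s)‖ := by
    intro a b
    refine (M_abs_summable hF hG a b).congr fun s => ?_
    rw [Real.norm_eq_abs, abs_mul]
  have hHabs : Summable fun z => |H z| := by
    rw [summable_prod_of_nonneg (fun z => abs_nonneg _)]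
    constructor
    · intro ab
      have h2 : Summable fun w : S × S =>
          (|F (ab.1, w.1)| * |G (ab.2, w.1)|) * (|F (ab.1, w.2)| * |G (ab.2, w.2)|) :=
        (M_abs_summable hF hG ab.1 ab.2).mul_of_nonneg (M_abs_summable hF hG ab.1 ab.2)
          (fun s => mul_nonneg (abs_nonneg _) (abs_nonneg _))
          (fun s => mul_nonneg (abs_nonneg _) (abs_nonneg _))
      refine h2.congr fun w => ?_
      simp only [hHdef, abs_mul]
      try ring
    · refine Summable.of_nonneg_of_le
        (fun ab => tsum_nonneg fun w => abs_nonneg _) (fun ab => ?_)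
        ((rho_sq_summable hF).mul_of_nonneg (rho_sq_summable hG)
          (fun a => sq_nonneg _) (fun b => sq_nonneg _))
      have habs : ∀ w : S × S, |H (ab, w)| =
          (fun s => |F (ab.1, s)| * |G (ab.2, s)|) w.1 *
          (fun s => |F (ab.1, s)| * |G (ab.2, s)|) w.2 := by
        intro w; simp only [hHdef, abs_mul]; try ring
      have hn : Summable fun s => ‖|F (ab.1, s)| * |G (ab.2, s)|‖ := by
        refine (M_abs_summable hF hG ab.1 ab.2).congr fun s => ?_
        rw [Real.norm_eq_abs, abs_mul, abs_abs, abs_abs]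
      calc ∑' w : S × S, |H (ab, w)|
          = (∑' s, |F (ab.1, s)| * |G (ab.2, s)|) * (∑' s, |F (ab.1, s)| * |G (ab.2, s)|) := by
            rw [tsum_congr habs, ← tsum_mul_tsum_of_summable_norm hn hn]
        _ ≤ (rho F ab.1 * rho G ab.2) * (rho F ab.1 * rho G ab.2) := by
            have h1 := row_abs_le hF hG ab.1 ab.2
            have h0 : (0:ℝ) ≤ ∑' s, |F (ab.1, s)| * |G (ab.2, s)| :=
              tsum_nonneg fun s => mul_nonneg (abs_nonneg _) (abs_nonneg _)
            nlinarith
        _ = rho F ab.1 ^ 2 * rho G ab.2 ^ 2 := by ring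
  have hH : Summable H := summable_abs_iff.mp hHabs
  -- Step 1: expand the square
  have step1 : ∀ z : A × B, (∑' s, F (z.1, s) * G (z.2, s)) ^ 2 = ∑' w : S × S, H (z, w) := by
    intro z
    rw [sq, tsum_mul_tsum_of_summable_norm (hMn z.1 z.2) (hMn z.1 z.2)]
  -- Step 2: Fubini
  have hH' : Summable fun w : (S × S) × (A × B) => H (Equiv.prodComm _ _ w) :=
    (Equiv.prodComm (S × S) (A × B)).summable_iff.mpr hH
  calc ∑' z : A × B, (∑' s : S, F (z.1, s) * G (z.2, s)) ^ 2
      = ∑' z : A × B, ∑' w : S × S, H (z, w) := tsum_congr step1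
    _ = ∑' zw : (A × B) × (S × S), H zw :=
        (Summable.tsum_prod' hH fun z => hH.comp_injective
          (i := fun w : S × S => (z, w)) fun x y h => (Prod.ext_iff.mp h).2).symm
    _ = ∑' wz : (S × S) × (A × B), H (Equiv.prodComm _ _ wz) :=
        ((Equiv.prodComm (S × S) (A × B)).tsum_eq H).symm
    _ = ∑' w : S × S, ∑' z : A × B, H (Equiv.prodComm _ _ (w, z)) :=
        Summable.tsum_prod' hH' fun w => hH'.comp_injective
          (i := fun z : A × B => (w, z)) fun x y h => (Prod.ext_iff.mp h).2
    _ = ∑' w : S × S, ∑' z : A × B, H (z, w) :=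
        tsum_congr fun w => tsum_congr fun z => by
          rw [Equiv.prodComm_apply, Prod.swap_prod_mk]
    _ = ∑' w : S × S, (∑' a, F (a, w.1) * F (a, w.2)) * (∑' b, G (b, w.1) * G (b, w.2)) := by
        refine tsum_congr fun w => ?_
        have hFn : Summable fun a => ‖F (a, w.1) * F (a, w.2)‖ := by
          refine (summable_mul_of_sq (u := fun a => |F (a, w.1)|)
            (sliceS_abs hF w.1) (sliceS_abs hF w.2)).congr fun a => ?_
          rw [Real.norm_eq_abs, abs_mul]
        have hGn : Summable fun b => ‖G (b, w.1) * G (b, w.2)‖ := by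
          refine (summable_mul_of_sq (sliceS_abs hG w.1) (sliceS_abs hG w.2)).congr fun b => ?_
          rw [Real.norm_eq_abs, abs_mul]
        rw [tsum_mul_tsum_of_summable_norm hFn hGn]
        refine tsum_congr fun z => ?_
        simp only [hHdef]
        ring

end core

@[simp] lemma fe_apply {m n k : ℕ} (h : m + n = k) (z : (Fin m → ℕ) × (Fin n → ℕ)) (i : Fin k) :
    fe m n k h z i = if h' : i.val < m then z.1 ⟨i, h'⟩ else pad z.2 (i.val - m) := rfl

lemma pad_fe {m n k : ℕ} (h : m + n = k) (z : (Fin m → ℕ) × (Fin n → ℕ)) (j : ℕ) :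
    pad (fe m n k h z) j = if hj : j < m then z.1 ⟨j, hj⟩ else pad z.2 (j - m) := by
  by_cases hj : j < m
  · have hjk : j < k := by omega
    simp [pad, fe, hjk, hj]
  · by_cases hjk : j < k
    · simp [pad, fe, hjk, hj]
    · have h1 : ¬ (j - m < n) := by omega
      simp [pad, fe, hjk, hj, h1]

def bswap (m n k : ℕ) (h : m + n = k) : Equiv.Perm (Fin k) where
  toFun i := if h' : i.val < n then ⟨i.val + m, by omega⟩ else ⟨i.val - n, by omega⟩
  invFun i := if h' : i.val < m then ⟨i.val + n, by omega⟩ else ⟨i.val - m, by omega⟩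
  left_inv i := by
    by_cases h' : i.val < n
    · have h1 : ¬ (i.val + m < m) := by omega
      simp only [dif_pos h', dif_neg h1]
      exact Fin.ext (by first | (simp; omega) | simp)
    · have h2 : i.val - n < m := by omega
      simp only [dif_neg h', dif_pos h2]
      exact Fin.ext (by first | (simp; omega) | simp)
  right_inv i := by
    by_cases h' : i.val < m
    · have h1 : ¬ (i.val + n < n) := by omega
      simp only [dif_pos h', dif_neg h1]
      exact Fin.ext (by first | (simp; omega) | simp)
    · have h2 : i.val - m < n := by omega
      simp only [dif_neg h', dif_pos h2]
      exact Fin.ext (by first | (simp; omega) | simp)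

lemma fe_swap {m n k : ℕ} (h : m + n = k) (h' : n + m = k) {f : (Fin k → ℕ) → ℝ}
    (hf : IsSym f) (u : Fin m → ℕ) (v : Fin n → ℕ) :
    f (fe n m k h' (v, u)) = f (fe m n k h (u, v)) := by
  have hcomp : (fe m n k h (u, v)) ∘ (bswap m n k h) = fe n m k h' (v, u) := by
    funext i
    simp only [Function.comp_apply, fe_apply, bswap, Equiv.coe_fn_mk]
    by_cases hi : i.val < n
    · have h1 : ¬ (i.val + m < m) := by omega
      have h2 : i.val + m - m = i.val := by omega
      simp [hi, h1, h2, pad]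
    · have h2 : i.val - n < m := by omega
      simp [hi, h2, pad]
  rw [← hcomp, hf (bswap m n k h)]

lemma contr_eval {m n r' p' q' : ℕ} (hp' : m + r' = p') (hq' : n + r' = q')
    (f' : (Fin p' → ℕ) → ℝ) (g' : (Fin q' → ℕ) → ℝ)
    (hk : m + n = p' + q' - 2 * r')
    (z : (Fin m → ℕ) × (Fin n → ℕ)) :
    contr p' q' r' f' g' (fe m n _ hk z)
      = ∑' s : Fin r' → ℕ,
          f' (fe m r' p' hp' (z.1, s)) * g' (fe n r' q' hq' (z.2, s)) := by
  have hm : p' - r' = m := by omega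
  have hn : q' - r' = n := by omega
  simp only [contr, hm, hn]
  refine tsum_congr fun s => ?_
  congr 1
  · refine congrArg f' (funext fun i => ?_)
    by_cases hi : i.val < m
    · simp [pad_fe, hi]
    · simp [pad_fe, hi]
  · refine congrArg g' (funext fun i => ?_)
    by_cases hi : i.val < n
    · have h1 : ¬ (m + i.val < m) := by omega
      have h2 : m + i.val - m = i.val := by omega
      have h3 : m + i.val < p' + q' - 2 * r' := by omega
      simp [pad_fe, hi, h1, h2, h3, pad]
    · have h1 : ¬ (m + i.val < m) := by omega
      have h2 : m + i.val - m = i.val := by omega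
      simp [pad_fe, hi, h1, h2]

lemma recast_fe {m n k k' : ℕ} (hk : m + n = k) (hk' : m + n = k')
    (C : (Fin k → ℕ) → ℝ) (z : (Fin m → ℕ) × (Fin n → ℕ)) :
    recast k' C (fe m n k' hk' z) = C (fe m n k hk z) := by
  unfold recast
  congr 1
  funext i
  rw [pad_fe, fe_apply]

set_option maxHeartbeats 2000000 in
theorem stmt_5 (p q r : ℕ) (hr1 : 1 ≤ r) (hr2 : r < min p q)
    (f : (Fin p → ℕ) → ℝ) (g : (Fin q → ℕ) → ℝ)
    (hf : IsSym f) (hg : IsSym g)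
    (hfs : Summable fun x => f x ^ 2) (hgs : Summable fun x => g x ^ 2) :
    nsq (contr p q r f g)
      = hinner (recast (2*r) (contr p p (p - r) f f)) (recast (2*r) (contr q q (q - r) g g))
    ∧ nsq (contr p q r f g)
      ≤ (1/2) * (nsq (contr p p (p - r) f f) + nsq (contr q q (q - r) g g)) := by
  have hrp : r ≤ p := le_of_lt (lt_of_lt_of_le hr2 (min_le_left p q))
  have hrq : r ≤ q := le_of_lt (lt_of_lt_of_le hr2 (min_le_right p q))
  obtain ⟨a, rfl⟩ : ∃ a, p = a + r := ⟨p - r, by omega⟩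
  obtain ⟨b, rfl⟩ : ∃ b, q = b + r := ⟨q - r, by omega⟩
  rw [Nat.add_sub_cancel, Nat.add_sub_cancel]
  have hk : a + b = (a + r) + (b + r) - 2 * r := by omega
  have hka : r + r = (a + r) + (a + r) - 2 * a := by omega
  have hkb : r + r = (b + r) + (b + r) - 2 * b := by omega
  have hrr : r + r = 2 * r := by omega
  have hFs : Summable fun z : (Fin a → ℕ) × (Fin r → ℕ) => f (fe a r (a + r) rfl z) ^ 2 :=
    (fe a r (a + r) rfl).summable_iff.mpr hfs
  have hGs : Summable fun z : (Fin b → ℕ) × (Fin r → ℕ) => g (fe b r (b + r) rfl z) ^ 2 :=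
    (fe b r (b + r) rfl).summable_iff.mpr hgs
  -- the three tsum-identifications
  have h1 : nsq (contr (a + r) (b + r) r f g)
      = ∑' z : (Fin a → ℕ) × (Fin b → ℕ),
          (∑' s : Fin r → ℕ, f (fe a r (a + r) rfl (z.1, s)) * g (fe b r (b + r) rfl (z.2, s))) ^ 2 := by
    rw [nsq, ← (fe a b _ hk).tsum_eq (fun x => contr (a + r) (b + r) r f g x ^ 2)]
    exact tsum_congr fun z => by rw [contr_eval rfl rfl f g hk z]
  have h2 : nsq (contr (a + r) (a + r) a f f)
      = ∑' w : (Fin r → ℕ) × (Fin r → ℕ),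
          (∑' u : Fin a → ℕ, f (fe a r (a + r) rfl (u, w.1)) * f (fe a r (a + r) rfl (u, w.2))) ^ 2 := by
    rw [nsq, ← (fe r r _ hka).tsum_eq (fun x => contr (a + r) (a + r) a f f x ^ 2)]
    refine tsum_congr fun w => ?_
    rw [contr_eval (by omega) (by omega) f f hka w]
    congr 1
    exact tsum_congr fun u => by rw [fe_swap rfl (by omega) hf u w.1, fe_swap rfl (by omega) hf u w.2]
  have h3 : nsq (contr (b + r) (b + r) b g g)
      = ∑' w : (Fin r → ℕ) × (Fin r → ℕ),
          (∑' u : Fin b → ℕ, g (fe b r (b + r) rfl (u, w.1)) * g (fe b r (b + r) rfl (u, w.2))) ^ 2 := by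
    rw [nsq, ← (fe r r _ hkb).tsum_eq (fun x => contr (b + r) (b + r) b g g x ^ 2)]
    refine tsum_congr fun w => ?_
    rw [contr_eval (by omega) (by omega) g g hkb w]
    congr 1
    exact tsum_congr fun u => by rw [fe_swap rfl (by omega) hg u w.1, fe_swap rfl (by omega) hg u w.2]
  have h4 : hinner (recast (2*r) (contr (a + r) (a + r) a f f))
        (recast (2*r) (contr (b + r) (b + r) b g g))
      = ∑' w : (Fin r → ℕ) × (Fin r → ℕ),
          (∑' u : Fin a → ℕ, f (fe a r (a + r) rfl (u, w.1)) * f (fe a r (a + r) rfl (u, w.2)))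
          * (∑' u : Fin b → ℕ, g (fe b r (b + r) rfl (u, w.1)) * g (fe b r (b + r) rfl (u, w.2))) := by
    rw [hinner, ← (fe r r (2*r) hrr).tsum_eq (fun x =>
      recast (2*r) (contr (a + r) (a + r) a f f) x * recast (2*r) (contr (b + r) (b + r) b g g) x)]
    refine tsum_congr fun w => ?_
    rw [recast_fe hka hrr, recast_fe hkb hrr,
      contr_eval (by omega) (by omega) f f hka w, contr_eval (by omega) (by omega) g g hkb w]
    congr 1
    · exact tsum_congr fun u => by
        rw [fe_swap rfl (by omega) hf u w.1, fe_swap rfl (by omega) hf u w.2]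
    · exact tsum_congr fun u => by
        rw [fe_swap rfl (by omega) hg u w.1, fe_swap rfl (by omega) hg u w.2]
  have hmain : nsq (contr (a + r) (b + r) r f g)
      = ∑' w : (Fin r → ℕ) × (Fin r → ℕ),
          (∑' u : Fin a → ℕ, f (fe a r (a + r) rfl (u, w.1)) * f (fe a r (a + r) rfl (u, w.2)))
          * (∑' u : Fin b → ℕ, g (fe b r (b + r) rfl (u, w.1)) * g (fe b r (b + r) rfl (u, w.2))) := by
    rw [h1]
    exact core1 (F := fun z => f (fe a r (a + r) rfl z)) (G := fun z => g (fe b r (b + r) rfl z))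
      hFs hGs
  have hKsq : Summable fun w : (Fin r → ℕ) × (Fin r → ℕ) =>
      (∑' u : Fin a → ℕ, f (fe a r (a + r) rfl (u, w.1)) * f (fe a r (a + r) rfl (u, w.2))) ^ 2 :=
    coreK (F := fun z => f (fe a r (a + r) rfl z)) hFs
  have hLsq : Summable fun w : (Fin r → ℕ) × (Fin r → ℕ) =>
      (∑' u : Fin b → ℕ, g (fe b r (b + r) rfl (u, w.1)) * g (fe b r (b + r) rfl (u, w.2))) ^ 2 :=
    coreK (F := fun z => g (fe b r (b + r) rfl z)) hGs
  constructor
  · rw [hmain, h4]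
  · rw [hmain, h2, h3]
    calc ∑' w : (Fin r → ℕ) × (Fin r → ℕ),
          (∑' u : Fin a → ℕ, f (fe a r (a + r) rfl (u, w.1)) * f (fe a r (a + r) rfl (u, w.2)))
          * (∑' u : Fin b → ℕ, g (fe b r (b + r) rfl (u, w.1)) * g (fe b r (b + r) rfl (u, w.2)))
        ≤ ∑' w : (Fin r → ℕ) × (Fin r → ℕ), (1/2) *
          ((∑' u : Fin a → ℕ, f (fe a r (a + r) rfl (u, w.1)) * f (fe a r (a + r) rfl (u, w.2))) ^ 2
          + (∑' u : Fin b → ℕ, g (fe b r (b + r) rfl (u, w.1)) * g (fe b r (b + r) rfl (u, w.2))) ^ 2) := by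
          refine Summable.tsum_le_tsum (fun w => ?_) (summable_mul_of_sq hKsq hLsq)
            ((hKsq.add hLsq).mul_left (1/2))
          nlinarith [sq_nonneg ((∑' u : Fin a → ℕ, f (fe a r (a + r) rfl (u, w.1)) * f (fe a r (a + r) rfl (u, w.2)))
            - (∑' u : Fin b → ℕ, g (fe b r (b + r) rfl (u, w.1)) * g (fe b r (b + r) rfl (u, w.2))))]
      _ = (1/2) * (∑' w : (Fin r → ℕ) × (Fin r → ℕ),
          ((∑' u : Fin a → ℕ, f (fe a r (a + r) rfl (u, w.1)) * f (fe a r (a + r) rfl (u, w.2))) ^ 2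
          + (∑' u : Fin b → ℕ, g (fe b r (b + r) rfl (u, w.1)) * g (fe b r (b + r) rfl (u, w.2))) ^ 2)) := by
          rw [tsum_mul_left]
      _ = (1/2) * ((∑' w : (Fin r → ℕ) × (Fin r → ℕ),
          (∑' u : Fin a → ℕ, f (fe a r (a + r) rfl (u, w.1)) * f (fe a r (a + r) rfl (u, w.2))) ^ 2)
          + ∑' w : (Fin r → ℕ) × (Fin r → ℕ),
          (∑' u : Fin b → ℕ, g (fe b r (b + r) rfl (u, w.1)) * g (fe b r (b + r) rfl (u, w.2))) ^ 2) := by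
          rw [Summable.tsum_add hKsq hLsq]
end

section
/- Let Z be a standard Gaussian random variable. Then for every integer p ≥ 1, E[H_p(Z)⁴] − 3 · E[H_p(Z)²]² ≥ 0, where H_p is the p-th (probabilists') Hermite polynomial. Equivalently, the fourth cumulant of any Hermite polynomial of a standard Gaussian is nonnegative. -/
open MeasureTheory ProbabilityTheory Polynomial Real Filter Set Topology

noncomputable section
namespace HermiteAux

def H (n : ℕ) : Polynomial ℝ := (Polynomial.hermite n).map (Int.castRingHom ℝ)

lemma H_zero : H 0 = 1 := by simp [H, hermite_zero]

lemma H_succ (n : ℕ) : H (n + 1) = X * H n - derivative (H n) := by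
  simp [H, hermite_succ, Polynomial.derivative_map]

lemma H_monic (n : ℕ) : (H n).Monic := (hermite_monic n).map _

lemma H_natDegree (n : ℕ) : (H n).natDegree = n := by
  rw [H, natDegree_map_eq_of_injective (f := Int.castRingHom ℝ) (fun a b h => by simpa using h), natDegree_hermite]

lemma H_degree (n : ℕ) : (H n).degree = n := by
  rw [degree_eq_natDegree (H_monic n).ne_zero, H_natDegree]

lemma H_coeff_self (n : ℕ) : (H n).coeff n = 1 := by
  simp [H, coeff_map, coeff_hermite_self]

lemma H_coeff_of_lt {n k : ℕ} (h : n < k) : (H n).coeff k = 0 := by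
  simp [H, coeff_map, coeff_hermite_of_lt h]

lemma derivative_H (n : ℕ) : derivative (H n) = n • H (n - 1) := by
  induction n with
  | zero => simp [H_zero]
  | succ n ih =>
    cases n with
    | zero => simp [H_succ, H_zero]
    | succ m =>
      rw [H_succ (m + 1), derivative_sub, derivative_mul, derivative_X, one_mul, ih]
      have hd : derivative (H m) = X * H m - H (m + 1) := by rw [H_succ]; ring
      rw [derivative_smul, ih] at *
      simp only [Nat.add_sub_cancel] at *
      rw [hd, H_succ m]
      simp only [smul_sub, succ_nsmul, smul_smul]
      ring

def e (x : ℝ) : ℝ := Real.exp (-(x ^ 2 / 2))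

lemma int_pow_e (n : ℕ) : Integrable (fun x : ℝ => x ^ n * e x) := by
  have h := integrable_rpow_mul_exp_neg_mul_sq (b := 1/2) (by norm_num) (s := (n : ℝ))
    ((by norm_num : (-1:ℝ) < 0).trans_le (Nat.cast_nonneg n))
  have heq : ∀ x : ℝ, x ^ (n : ℝ) * Real.exp (-(1/2) * x ^ 2) = x ^ n * e x := by
    intro x
    rw [Real.rpow_natCast, e, show -(1/2 : ℝ) * x ^ 2 = -(x ^ 2 / 2) by ring]
  exact h.congr (Eventually.of_forall heq)

lemma intP (q : Polynomial ℝ) : Integrable (fun x : ℝ => q.eval x * e x) := by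
  induction q using Polynomial.induction_on' with
  | add p q hp hq => simpa [add_mul, Pi.add_def] using hp.add hq
  | monomial n a => simpa [eval_monomial, mul_assoc] using (int_pow_e n).const_mul a

lemma tend_pow_e (n : ℕ) : Tendsto (fun x : ℝ => x ^ n * e x) (cocompact ℝ) (𝓝 0) := by
  have h := tendsto_rpow_abs_mul_exp_neg_mul_sq_cocompact (a := 1/2) (by norm_num) (n : ℝ)
  refine squeeze_zero_norm' (Eventually.of_forall fun x => ?_) h
  rw [norm_mul, Real.norm_eq_abs, Real.norm_eq_abs, abs_pow, e,
    abs_of_pos (Real.exp_pos _), Real.rpow_natCast,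
    show -(1/2 : ℝ) * x ^ 2 = -(x ^ 2 / 2) by ring]

lemma tendP (q : Polynomial ℝ) : Tendsto (fun x : ℝ => q.eval x * e x) (cocompact ℝ) (𝓝 0) := by
  induction q using Polynomial.induction_on' with
  | add p q hp hq => simpa [add_mul] using hp.add hq
  | monomial n a =>
      simpa [eval_monomial, mul_assoc] using (tend_pow_e n).const_mul a

lemma key (q : Polynomial ℝ) :
    ∫ x : ℝ, (X * q - derivative q).eval x * e x = 0 := by
  set g : ℝ → ℝ := fun x => (X * q - derivative q).eval x * e x with hg
  have hF : ∀ x : ℝ, HasDerivAt (fun y => -(q.eval y * e y)) (g x) x := by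
    intro x
    have h1 : HasDerivAt (fun y : ℝ => -(y ^ 2 / 2)) (-x) x := by
      have := ((hasDerivAt_pow 2 x).div_const 2).neg
      norm_num at this
      exact this
    have he : HasDerivAt e (-x * e x) x := by
      have := h1.exp
      rw [show e = fun x => Real.exp (-(x ^ 2 / 2)) from rfl]; simpa [e, mul_comm] using this
    have h2 : HasDerivAt (fun y => -(q.eval y * e y)) _ x := ((q.hasDerivAt x).mul he).neg
    convert h2 using 1
    simp only [hg, eval_sub, eval_mul, eval_X]
    ring
  have hint : Integrable g := intP (X * q - derivative q)
  have htop : Tendsto (fun y => -(q.eval y * e y)) atTop (𝓝 0) := by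
    have := (tendP q).neg
    rw [neg_zero] at this
    exact this.mono_left (by rw [cocompact_eq_atBot_atTop]; exact le_sup_right)
  have hbot : Tendsto (fun y => -(q.eval y * e y)) atBot (𝓝 0) := by
    have := (tendP q).neg
    rw [neg_zero] at this
    exact this.mono_left (by rw [cocompact_eq_atBot_atTop]; exact le_sup_left)
  have h1 : ∫ x in Ioi (0:ℝ), g x = 0 - -(q.eval 0 * e 0) :=
    integral_Ioi_of_hasDerivAt_of_tendsto' (fun x _ => hF x) hint.integrableOn htop
  have h2 : ∫ x in Iic (0:ℝ), g x = -(q.eval 0 * e 0) - 0 :=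
    integral_Iic_of_hasDerivAt_of_tendsto' (fun x _ => hF x) hint.integrableOn hbot
  rw [← intervalIntegral.integral_Iic_add_Ioi (b := 0) hint.integrableOn hint.integrableOn, h1, h2]
  ring

lemma pdf_eq (x : ℝ) : gaussianPDFReal 0 1 x = (Real.sqrt (2 * π))⁻¹ * e x := by
  simp [gaussianPDFReal, e, neg_div]

lemma integral_gauss (f : ℝ → ℝ) :
    ∫ x, f x ∂(gaussianReal 0 1) = ∫ x, f x * gaussianPDFReal 0 1 x := by
  rw [gaussianReal_of_var_ne_zero 0 one_ne_zero]
  have hd : gaussianPDF 0 1 = fun x => ((gaussianPDFReal 0 1 x).toNNReal : ENNReal) := rfl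
  rw [hd, integral_withDensity_eq_integral_smul
    ((measurable_gaussianPDFReal 0 1).real_toNNReal) f]
  congr 1
  funext x
  rw [NNReal.smul_def, smul_eq_mul, Real.coe_toNNReal _ (gaussianPDFReal_nonneg 0 1 x), mul_comm]

def Ex (q : Polynomial ℝ) : ℝ := ∫ x, q.eval x ∂(gaussianReal 0 1)

lemma intE (q : Polynomial ℝ) : Integrable (fun x => q.eval x) (gaussianReal 0 1) := by
  rw [gaussianReal_of_var_ne_zero 0 one_ne_zero,
    integrable_withDensity_iff (measurable_gaussianPDF 0 1)
      (Eventually.of_forall fun x => ENNReal.ofReal_lt_top)]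
  have heq : ∀ x : ℝ, q.eval x * (gaussianPDF 0 1 x).toReal
      = (Real.sqrt (2 * π))⁻¹ * (q.eval x * e x) := by
    intro x
    rw [gaussianPDF, ENNReal.toReal_ofReal (gaussianPDFReal_nonneg 0 1 x), pdf_eq]
    ring
  simp_rw [heq]
  exact (intP q).const_mul _

lemma Ex_eq (q : Polynomial ℝ) :
    Ex q = (Real.sqrt (2 * π))⁻¹ * ∫ x, q.eval x * e x := by
  rw [Ex, integral_gauss]
  simp_rw [pdf_eq, mul_left_comm _ ((Real.sqrt (2 * π))⁻¹) _]
  exact integral_const_mul _ _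

lemma Ex_sub (p q : Polynomial ℝ) : Ex (p - q) = Ex p - Ex q := by
  simp_rw [Ex, eval_sub]
  exact integral_sub (intE p) (intE q)

lemma Ex_Cmul (a : ℝ) (q : Polynomial ℝ) : Ex (C a * q) = a * Ex q := by
  simp_rw [Ex, eval_mul, eval_C]
  exact integral_const_mul _ _

lemma Ex_add (p q : Polynomial ℝ) : Ex (p + q) = Ex p + Ex q := by
  simp_rw [Ex, eval_add]
  exact integral_add (intE p) (intE q)

lemma derivative_H' (n : ℕ) : derivative (H n) = C (n : ℝ) * H (n - 1) := by
  rw [derivative_H, nsmul_eq_mul, C_eq_natCast]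

lemma Ex_one : Ex 1 = 1 := by
  simp [Ex]

lemma stein (q : Polynomial ℝ) : Ex (X * q) = Ex (derivative q) := by
  have h : Ex (X * q - derivative q) = 0 := by
    rw [Ex_eq, key]
    ring
  rw [Ex_sub] at h
  linarith

lemma Ex_H (n : ℕ) : Ex (H n) = if n = 0 then 1 else 0 := by
  cases n with
  | zero => simpa [H_zero] using Ex_one
  | succ n =>
    rw [H_succ, Ex_sub, stein]
    simp

lemma Ex_HH (m : ℕ) : ∀ n : ℕ, Ex (H m * H n) = if m = n then (m.factorial : ℝ) else 0 := by
  induction m with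
  | zero =>
    intro n
    rw [H_zero, one_mul, Ex_H]
    simp [eq_comm]
  | succ m ih =>
    intro n
    have hrec : Ex (H (m + 1) * H n) = n * Ex (H m * H (n - 1)) := by
      rw [H_succ, sub_mul, mul_assoc, Ex_sub, stein, derivative_mul, derivative_H' m,
        derivative_H' n]
      rw [show C (m : ℝ) * H (m - 1) * H n + H m * (C (n : ℝ) * H (n - 1))
          = C (m : ℝ) * (H (m - 1) * H n) + C (n : ℝ) * (H m * H (n - 1)) by ring]
      rw [Ex_add, Ex_Cmul, Ex_Cmul,
        show C (m : ℝ) * H (m - 1) * H n = C (m : ℝ) * (H (m - 1) * H n) by ring, Ex_Cmul]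
      ring
    cases n with
    | zero =>
      rw [hrec]
      simp
    | succ k =>
      rw [hrec, Nat.add_sub_cancel, ih k]
      by_cases h : m = k
      · subst h
        simp [Nat.factorial_succ]
        try ring
      · simp [h, fun hh => h (Nat.succ_injective hh)]

lemma repr : ∀ (n : ℕ) (q : Polynomial ℝ), q.degree < (n : ℕ) →
    ∃ c : ℕ → ℝ, q = ∑ k ∈ Finset.range n, C (c k) * H k := by
  intro n
  induction n with
  | zero =>
    intro q hq
    refine ⟨0, ?_⟩
    simp only [Finset.range_zero, Finset.sum_empty]
    exact degree_eq_bot.mp (Nat.WithBot.lt_zero_iff.mp (by exact_mod_cast hq))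
  | succ n ih =>
    intro q hq
    set r := q - C (q.coeff n) * H n with hr
    have hdeg : r.degree < (n : ℕ) := by
      rw [degree_lt_iff_coeff_zero]
      intro m hm
      rcases eq_or_lt_of_le hm with h | h
      · subst h
        simp [hr, coeff_C_mul, H_coeff_self]
      · have h1 : q.coeff m = 0 := coeff_eq_zero_of_degree_lt
          (hq.trans_le (by exact_mod_cast h))
        simp [hr, coeff_C_mul, h1, H_coeff_of_lt h]
    obtain ⟨c, hc⟩ := ih r hdeg
    refine ⟨fun k => if k = n then q.coeff n else c k, ?_⟩
    rw [Finset.sum_range_succ]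
    have hsum : ∑ k ∈ Finset.range n, C (if k = n then q.coeff n else c k) * H k
        = ∑ k ∈ Finset.range n, C (c k) * H k := by
      refine Finset.sum_congr rfl fun k hk => ?_
      rw [if_neg (Finset.mem_range.mp hk).ne]
    rw [hsum, show (fun k => if k = n then q.coeff n else c k) n = q.coeff n by simp,
      ← hc, hr]
    ring

lemma Ex_sum (s : Finset ℕ) (f : ℕ → Polynomial ℝ) :
    Ex (∑ k ∈ s, f k) = ∑ k ∈ s, Ex (f k) := by
  simp_rw [Ex, eval_finset_sum]
  exact integral_finset_sum _ fun i _ => intE _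

lemma parseval (n : ℕ) (c : ℕ → ℝ) :
    Ex ((∑ k ∈ Finset.range n, C (c k) * H k) * (∑ l ∈ Finset.range n, C (c l) * H l))
      = ∑ k ∈ Finset.range n, (c k) ^ 2 * (k.factorial : ℝ) := by
  rw [Finset.sum_mul_sum]
  have hterm : ∀ k l : ℕ, (C (c k) * H k) * (C (c l) * H l) = C (c k * c l) * (H k * H l) := by
    intro k l
    rw [C_mul]
    ring
  simp_rw [hterm]
  rw [Ex_sum]
  refine Finset.sum_congr rfl fun k hk => ?_
  rw [Ex_sum]
  simp_rw [Ex_Cmul, Ex_HH]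
  rw [Finset.sum_eq_single k]
  · rw [if_pos rfl]
    ring
  · intro l _ hlk
    rw [if_neg fun h => hlk h.symm, mul_zero]
  · intro hk'
    exact absurd hk hk'

lemma aeval_eq_eval_H (p : ℕ) (x : ℝ) :
    (Polynomial.aeval x (Polynomial.hermite p) : ℝ) = (H p).eval x := by
  rw [H, eval_map, aeval_def, algebraMap_int_eq]

end HermiteAux
end

open HermiteAux

theorem stmt_10 (p : ℕ) (hp : 1 ≤ p) :
    0 ≤ (∫ x, (Polynomial.aeval x (Polynomial.hermite p) : ℝ)^4 ∂(gaussianReal 0 1))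
        - 3 * (∫ x, (Polynomial.aeval x (Polynomial.hermite p) : ℝ)^2 ∂(gaussianReal 0 1))^2 := by
  classical
  set Q : Polynomial ℝ := H p * H p with hQ
  have hdegQ : Q.degree < ((2 * p + 1 : ℕ) : WithBot ℕ) := by
    rw [hQ, Polynomial.degree_mul, H_degree]
    exact_mod_cast (by omega : p + p < 2 * p + 1)
  obtain ⟨c, hc⟩ := repr (2 * p + 1) Q hdegQ
  -- E[H_p^2] = p!
  have hEQ : Ex Q = (p.factorial : ℝ) := by rw [hQ, Ex_HH]; simp
  -- c 0 = p!
  have hc0 : c 0 = (p.factorial : ℝ) := by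
    have h1 : Ex Q = ∑ k ∈ Finset.range (2 * p + 1), c k * (if k = 0 then (1:ℝ) else 0) := by
      rw [hc, Ex_sum]
      exact Finset.sum_congr rfl fun k _ => by rw [Ex_Cmul, Ex_H]
    rw [hEQ, Finset.sum_eq_single 0 (fun l _ hl => by rw [if_neg hl, mul_zero])
      (fun h => absurd (Finset.mem_range.mpr (by omega)) h)] at h1
    simpa using h1.symm
  -- c (2p) = 1
  have hctop : c (2 * p) = 1 := by
    have h2 : Q.coeff (2 * p) = 1 := by
      have hm : Q.Monic := (H_monic p).mul (H_monic p)
      have hnd : Q.natDegree = 2 * p := by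
        rw [hQ, Polynomial.natDegree_mul (H_monic p).ne_zero (H_monic p).ne_zero, H_natDegree]
        omega
      simpa [hnd] using hm.coeff_natDegree
    have h1 : Q.coeff (2 * p) = ∑ k ∈ Finset.range (2 * p + 1), c k * (H k).coeff (2 * p) := by
      rw [hc, Polynomial.finset_sum_coeff]
      exact Finset.sum_congr rfl fun k _ => by rw [Polynomial.coeff_C_mul]
    rw [h2, Finset.sum_eq_single (2 * p)
      (fun l hl hlne => by
        rw [H_coeff_of_lt (by rcases Finset.mem_range.mp hl with h; omega), mul_zero])
      (fun h => absurd (Finset.mem_range.mpr (by omega)) h)] at h1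
    rw [H_coeff_self, mul_one] at h1
    exact h1.symm
  -- E[H_p^4] = Σ c_k² k!
  have hEQQ : Ex (Q * Q) = ∑ k ∈ Finset.range (2 * p + 1), (c k) ^ 2 * (k.factorial : ℝ) := by
    rw [show Q * Q = (∑ k ∈ Finset.range (2 * p + 1), C (c k) * H k)
        * (∑ l ∈ Finset.range (2 * p + 1), C (c l) * H l) by rw [← hc], parseval]
  -- lower bound on the sum
  have hsub : ({0, 2 * p} : Finset ℕ) ⊆ Finset.range (2 * p + 1) := by
    intro x hx
    simp only [Finset.mem_insert, Finset.mem_singleton] at hx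
    rcases hx with h | h <;> exact Finset.mem_range.mpr (by omega)
  have hge : ∑ k ∈ ({0, 2 * p} : Finset ℕ), (c k) ^ 2 * (k.factorial : ℝ)
      ≤ ∑ k ∈ Finset.range (2 * p + 1), (c k) ^ 2 * (k.factorial : ℝ) :=
    Finset.sum_le_sum_of_subset_of_nonneg hsub fun i _ _ => by positivity
  have hpair : ∑ k ∈ ({0, 2 * p} : Finset ℕ), (c k) ^ 2 * (k.factorial : ℝ)
      = (p.factorial : ℝ) ^ 2 + ((2 * p).factorial : ℝ) := by
    rw [Finset.sum_pair (by omega : (0 : ℕ) ≠ 2 * p), hc0, hctop]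
    simp
  -- (2p)! ≥ 2 (p!)²
  have hfact : (2 : ℝ) * (p.factorial : ℝ) ^ 2 ≤ ((2 * p).factorial : ℝ) := by
    have h2 := Nat.choose_mul_factorial_mul_factorial (by omega : p ≤ 2 * p)
    have h3 : 2 ≤ (2 * p).choose p := by
      have := Nat.choose_le_middle 1 (2 * p)
      rw [Nat.choose_one_right] at this
      have h4 : (2 * p) / 2 = p := by omega
      rw [h4] at this
      omega
    have h5 : 2 * (p.factorial * p.factorial) ≤ (2 * p).factorial := by
      calc 2 * (p.factorial * p.factorial)
          ≤ (2 * p).choose p * (p.factorial * p.factorial) :=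
            Nat.mul_le_mul_right _ h3
        _ = (2 * p).choose p * p.factorial * (2 * p - p).factorial := by
            rw [show 2 * p - p = p by omega]; ring
        _ = (2 * p).factorial := h2
    have := Nat.cast_le (α := ℝ).mpr h5
    push_cast at this
    nlinarith [this]
  -- identify the integrals
  have h4 : (∫ x, (Polynomial.aeval x (Polynomial.hermite p) : ℝ)^4 ∂(gaussianReal 0 1))
      = Ex (Q * Q) := by
    rw [Ex]
    congr 1
    funext x
    rw [aeval_eq_eval_H, hQ]
    simp only [Polynomial.eval_mul]
    ring
  have h2 : (∫ x, (Polynomial.aeval x (Polynomial.hermite p) : ℝ)^2 ∂(gaussianReal 0 1))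
      = Ex Q := by
    rw [Ex]
    congr 1
    funext x
    rw [aeval_eq_eval_H, hQ]
    simp only [Polynomial.eval_mul]
    ring
  rw [h4, h2, hEQQ, hEQ]
  nlinarith [hge, hpair, hfact, sq_nonneg ((p.factorial : ℝ))]
end
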